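/- arXiv:1305.1246 — 3 statements merged into one kernel-verified Lean document; each statement's English description precedes it below -/
import Mathlib

section
/- In the q = 1 case (commutative), the 2×6 matrix Ψ whose columns are ψ/√(1−t²p₁₁) and φ/√(1−t²p₁₁) (with ψ, φ as in the classical instanton frame and p₁₁ = |z₁|²) satisfies Ψ†Ψ = 1₂, hence P := ΨΨ† is a projection: P² = P and P† = P. -/
open Matrix in
/-- The 6×2 matrix `Ψ` with columns `ψ/√(1−t²|z₁|²)` and `φ/√(1−t²|z₁|²)` satisfies
`Ψ†Ψ = 1₂`, hence `P := ΨΨ†` is a projection: `P² = P` and `P† = P`. -/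
theorem stmt_7 (θ : ℝ) (hθ0 : 0 ≤ θ) (hθ1 : θ < Real.pi / 4)
    (t : ℝ) (ht : t = Real.sin (2 * θ))
    (z : Fin 3 → ℂ) (hz : ∑ i, ‖z i‖ ^ 2 = 1)
    (hden : t ^ 2 * ‖z 0‖ ^ 2 < 1)
    (ψ φ : Fin 6 → ℂ)
    (hψ : ψ = ![(Real.cos (2 * θ) : ℂ) * star (z 0),
                (Real.cos θ : ℂ) * star (z 1),
                (Real.cos θ : ℂ) * star (z 2),
                0,
                (Real.sin θ : ℂ) * star (z 2),
                (Real.sin θ : ℂ) * star (z 1)])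
    (hφ : φ = ![0,
                -(Real.sin θ : ℂ) * z 2,
                (Real.sin θ : ℂ) * z 1,
                (Real.cos (2 * θ) : ℂ) * z 0,
                (Real.cos θ : ℂ) * z 1,
                -(Real.cos θ : ℂ) * z 2])
    (Ψ : Matrix (Fin 6) (Fin 2) ℂ)
    (hΨ : ∀ i : Fin 6,
      Ψ i 0 = ψ i / (Real.sqrt (1 - t ^ 2 * ‖z 0‖ ^ 2) : ℂ) ∧
      Ψ i 1 = φ i / (Real.sqrt (1 - t ^ 2 * ‖z 0‖ ^ 2) : ℂ)) :
    Ψᴴ * Ψ = 1 ∧ (Ψ * Ψᴴ) * (Ψ * Ψᴴ) = Ψ * Ψᴴ ∧ (Ψ * Ψᴴ)ᴴ = Ψ * Ψᴴ := by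
  have hcpos : (0:ℝ) < 1 - t ^ 2 * ‖z 0‖ ^ 2 := by linarith
  have hd2 : (Real.sqrt (1 - t ^ 2 * ‖z 0‖ ^ 2)) ^ 2
      = 1 - t ^ 2 * ‖z 0‖ ^ 2 := Real.sq_sqrt hcpos.le
  have hdne : ((Real.sqrt (1 - t ^ 2 * ‖z 0‖ ^ 2)) : ℂ) ≠ 0 := by
    exact_mod_cast Complex.ofReal_ne_zero.mpr (ne_of_gt (Real.sqrt_pos.mpr hcpos))
  have habs : ∀ i, ((‖z i‖ : ℂ)) ^ 2 = z i * star (z i) := by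
    intro i
    rw [Complex.star_def, Complex.mul_conj']
  have hzz : z 0 * star (z 0) + z 1 * star (z 1) + z 2 * star (z 2) = 1 := by
    rw [← habs 0, ← habs 1, ← habs 2]
    have := hz
    simp [Fin.sum_univ_three] at this
    exact_mod_cast this
  have hsc : (Real.sin θ : ℂ) ^ 2 + (Real.cos θ : ℂ) ^ 2 = 1 := by
    exact_mod_cast Real.sin_sq_add_cos_sq θ
  have hc2 : (Real.cos (2*θ) : ℂ) = (Real.cos θ : ℂ)^2 - (Real.sin θ : ℂ)^2 := by
    exact_mod_cast Real.cos_two_mul' θ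
  have htC : (t : ℂ) = 2 * (Real.sin θ : ℂ) * (Real.cos θ : ℂ) := by
    rw [ht, Real.sin_two_mul]; push_cast; ring
  have hd2C : ((Real.sqrt (1 - t ^ 2 * ‖z 0‖ ^ 2)) : ℂ) ^ 2
      = 1 - (t:ℂ) ^ 2 * (z 0 * star (z 0)) := by
    rw [← habs 0]; norm_cast
  set d : ℂ := ((Real.sqrt (1 - t ^ 2 * ‖z 0‖ ^ 2)) : ℂ) with hddef
  have hstard : star d = d := by rw [hddef, Complex.star_def, Complex.conj_ofReal]
  have hstarR : ∀ r : ℝ, star ((r:ℝ):ℂ) = ((r:ℝ):ℂ) := fun r => by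
    rw [Complex.star_def, Complex.conj_ofReal]
  have hcol : ∀ (u v : Fin 6 → ℂ),
      (∑ i, star (u i / d) * (v i / d)) = (∑ i, star (u i) * v i) / d ^ 2 := by
    intro u v
    rw [Finset.sum_div]
    refine Finset.sum_congr rfl fun i _ => ?_
    rw [star_div₀, hstard, div_mul_div_comm]
    ring_nf
  have hdiag : (∑ i, star (ψ i) * ψ i) = d ^ 2 ∧ (∑ i, star (φ i) * φ i) = d ^ 2 := by
    constructor <;>
      simp only [hψ, hφ, Fin.sum_univ_succ, Fin.sum_univ_zero, Matrix.cons_val_zero,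
        Matrix.cons_val_succ, star_mul', star_star, star_zero, star_neg,
        hstarR, mul_zero, zero_mul, add_zero, zero_add,
        neg_mul, mul_neg, neg_neg] <;>
      linear_combination (norm := ring_nf)
        -hd2C + ((t:ℂ) + 2*(Real.sin θ:ℂ)*(Real.cos θ:ℂ)) * (z 0 * star (z 0)) * htC
        + ((Real.cos (2*θ):ℂ) + (Real.cos θ:ℂ)^2 - (Real.sin θ:ℂ)^2) * (z 0 * star (z 0)) * hc2
        + ((Real.sin θ:ℂ)^2+(Real.cos θ:ℂ)^2)^2 * hzz
        - ((Real.sin θ:ℂ)^2+(Real.cos θ:ℂ)^2) * (z 1 * star (z 1) + z 2 * star (z 2)) * hsc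
        + ((Real.sin θ:ℂ)^2+(Real.cos θ:ℂ)^2+1) * hsc
  have hoff1 : (∑ i, star (ψ i) * φ i) = 0 := by
    simp only [hψ, hφ, Fin.sum_univ_succ, Fin.sum_univ_zero, Matrix.cons_val_zero,
      Matrix.cons_val_succ, star_mul', star_star, star_zero, star_neg,
      hstarR, mul_zero, zero_mul, add_zero, zero_add,
      neg_mul, mul_neg, neg_neg]
    ring
  have hoff2 : (∑ i, star (φ i) * ψ i) = 0 := by
    simp only [hψ, hφ, Fin.sum_univ_succ, Fin.sum_univ_zero, Matrix.cons_val_zero,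
      Matrix.cons_val_succ, star_mul', star_star, star_zero, star_neg,
      hstarR, mul_zero, zero_mul, add_zero, zero_add,
      neg_mul, mul_neg, neg_neg]
    ring
  have h1 : Ψᴴ * Ψ = 1 := by
    ext i j
    rw [Matrix.mul_apply]
    simp only [Matrix.conjTranspose_apply]
    fin_cases i <;> fin_cases j <;>
        simp only [Fin.zero_eta, Fin.mk_one, Fin.isValue, fun x => (hΨ x).1,
          fun x => (hΨ x).2, hcol]
    · rw [Matrix.one_apply_eq, hdiag.1, div_self (pow_ne_zero 2 hdne)]
    · rw [Matrix.one_apply_ne (by decide), hoff1, zero_div]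
    · rw [Matrix.one_apply_ne (by decide), hoff2, zero_div]
    · rw [Matrix.one_apply_eq, hdiag.2, div_self (pow_ne_zero 2 hdne)]
  refine ⟨h1, ?_, ?_⟩
  · have : (Ψ * Ψᴴ) * (Ψ * Ψᴴ) = Ψ * (Ψᴴ * Ψ) * Ψᴴ := by
      rw [Matrix.mul_assoc Ψ Ψᴴ, ← Matrix.mul_assoc Ψᴴ, ← Matrix.mul_assoc, ← Matrix.mul_assoc]
    rw [this, h1, Matrix.mul_one]
  · simp [Matrix.conjTranspose_mul]
end

section
/- For a smooth function f : (0, ∞) → ℝ given by a convergent power series f(x) = ∑ cₙxⁿ, and an element x of a ring with y·x = q²·x·y, the q-derivative rule holds: ∂f(x) := ∑ cₙ ∂(xⁿ) satisfies ∂f(x) = Ḟ(qx)·∂x = ∂x·Ḟ(q⁻¹x), where Ḟ(x) := (f(qx) − f(q⁻¹x))/((q−q⁻¹)x) applied as a power series. In particular for polynomials f, the two-sided identity ∑ₙ cₙ [n]_q (qx)^{n−1} ∂x = ∂x · ∑ₙ cₙ [n]_q (q⁻¹x)^{n−1} holds in any algebra where (∂x)·x = q²·x·(∂x). -/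
/-- q-derivative rule for polynomials: if `∂` is a derivation on an ℝ-algebra and
`(∂x)·x = q²·x·(∂x)`, then for any polynomial `f = ∑ cₙ xⁿ`,
`∂f(x) = ∑ₙ cₙ[n]_q (qx)^(n−1)·∂x = ∂x · ∑ₙ cₙ[n]_q (q⁻¹x)^(n−1)`. -/
theorem stmt_13 {A : Type*} [Ring A] [Algebra ℝ A]
    (q : ℝ) (hq0 : 0 < q) (hq1 : q < 1)
    (D : A →ₗ[ℝ] A) (hleib : ∀ a b : A, D (a * b) = D a * b + a * D b)
    (x : A) (hx : D x * x = (q ^ 2) • (x * D x))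
    (f : Polynomial ℝ) :
    D (Polynomial.aeval x f) =
      ∑ n ∈ Finset.range (f.natDegree + 1),
        (f.coeff n * ((q ^ (n : ℤ) - q ^ (-(n : ℤ))) / (q - q⁻¹))) •
          ((q • x) ^ (n - 1) * D x) ∧
    D (Polynomial.aeval x f) =
      D x * ∑ n ∈ Finset.range (f.natDegree + 1),
        (f.coeff n * ((q ^ (n : ℤ) - q ^ (-(n : ℤ))) / (q - q⁻¹))) •
          (q⁻¹ • x) ^ (n - 1) := by
  have hq : q ≠ 0 := hq0.ne'
  have hinv : 1 < q⁻¹ := (one_lt_inv₀ hq0).mpr hq1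
  have hne : q - q⁻¹ ≠ 0 := sub_ne_zero.mpr (ne_of_lt (lt_trans hq1 hinv))
  have hqp : ∀ n : ℕ, (q : ℝ) ^ n ≠ 0 := fun n => pow_ne_zero n hq
  set c : ℕ → ℝ := fun n => (q ^ (n : ℤ) - q ^ (-(n : ℤ))) / (q - q⁻¹) with hc
  have hcn : ∀ n : ℕ, c n = (q ^ n - (q ^ n)⁻¹) / (q - q⁻¹) := by
    intro n; simp [hc, zpow_neg, zpow_natCast]
  have hc0 : c 0 = 0 := by simp [hcn 0]
  have hc1 : c 1 = 1 := by rw [hcn 1, pow_one, div_self hne]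
  have hcsucc : ∀ n : ℕ, c (n + 1) = q * c n + (q ^ n)⁻¹ := by
    intro n
    rw [hcn, hcn]
    have h := hqp n
    rw [← mul_div_assoc, div_add' _ _ _ hne, div_eq_div_iff hne hne]
    field_simp
    ring
  have hD1 : D (1 : A) = 0 := by
    have h := hleib 1 1
    simp only [mul_one, one_mul] at h
    exact add_eq_left.mp h.symm
  -- commutation: D x * x^k = q^(2k) • (x^k * D x)
  have hcomm : ∀ k : ℕ, D x * x ^ k = (q ^ (2 * k)) • (x ^ k * D x) := by
    intro k
    induction k with
    | zero => simp
    | succ k ih =>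
      rw [pow_succ, ← mul_assoc, ih, smul_mul_assoc, mul_assoc, hx,
        mul_smul_comm, smul_smul]
      rw [← mul_assoc, ← pow_succ]
      ring_nf
  -- left and right scalar sequences
  set a : ℕ → ℝ := fun n => c n * q ^ (n - 1) with ha
  set b : ℕ → ℝ := fun n => c n * (q⁻¹) ^ (n - 1) with hb
  have ha0 : a 0 = 0 := by simp [ha, hc0]
  have hb0 : b 0 = 0 := by simp [hb, hc0]
  have harec : ∀ n : ℕ, a (n + 1) = a n * q ^ 2 + 1 := by
    intro n
    cases n with
    | zero => simp [ha, hc0, hc1]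
    | succ k =>
      show c (k + 1 + 1) * q ^ (k + 1 + 1 - 1) = c (k + 1) * q ^ (k + 1 - 1) * q ^ 2 + 1
      rw [hcsucc (k + 1), Nat.add_sub_cancel, Nat.add_sub_cancel]
      have h := hqp (k + 1)
      field_simp
      ring
  have hbrec : ∀ n : ℕ, b (n + 1) = b n + (q⁻¹) ^ (2 * n) := by
    intro n
    cases n with
    | zero => simp [hb, hc0, hc1]
    | succ k =>
      show c (k + 1 + 1) * (q⁻¹) ^ (k + 1 + 1 - 1)
          = c (k + 1) * (q⁻¹) ^ (k + 1 - 1) + (q⁻¹) ^ (2 * (k + 1))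
      rw [hcsucc (k + 1), Nat.add_sub_cancel, Nat.add_sub_cancel]
      have h := hqp (k + 1)
      simp only [inv_pow]
      field_simp
      ring
  -- the main power lemma
  have hpow : ∀ n : ℕ, D (x ^ n) = a n • (x ^ (n - 1) * D x) ∧
      D (x ^ n) = b n • (D x * x ^ (n - 1)) := by
    intro n
    induction n with
    | zero => simp [ha0, hb0, hD1]
    | succ n ih =>
      obtain ⟨ihl, ihr⟩ := ih
      have hstep : D (x ^ (n + 1)) = D (x ^ n) * x + x ^ n * D x := by
        rw [pow_succ, hleib]
      constructor
      · rw [hstep, ihl, smul_mul_assoc, mul_assoc, hx, mul_smul_comm, smul_smul,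
          ← mul_assoc]
        have hxx : x ^ (n - 1) * x = x ^ n ∨ a n = 0 := by
          cases n with
          | zero => right; exact ha0
          | succ m => left; rw [← pow_succ]; simp
        rcases hxx with h | h
        · rw [h, Nat.add_sub_cancel, harec n, add_smul, one_smul, mul_comm (a n)]
        · rw [h, harec n, h]
          simp
      · rw [hstep, ihr, smul_mul_assoc]
        have hx2 : x ^ n * D x = ((q⁻¹) ^ (2 * n)) • (D x * x ^ n) := by
          rw [hcomm n, smul_smul, inv_pow]
          rw [inv_mul_cancel₀ (hqp (2 * n)), one_smul]
        rw [hx2]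
        have hxx : D x * x ^ (n - 1) * x = D x * x ^ n ∨ b n = 0 := by
          cases n with
          | zero => right; exact hb0
          | succ m => left; rw [mul_assoc, ← pow_succ]; simp
        rcases hxx with h | h
        · rw [h, Nat.add_sub_cancel, hbrec n, add_smul]
        · rw [h]
          simp only [zero_smul, zero_mul, zero_add, hbrec n, h, zero_add,
            Nat.add_sub_cancel]
  -- now expand aeval as a sum
  have haev : Polynomial.aeval x f =
      ∑ n ∈ Finset.range (f.natDegree + 1), f.coeff n • x ^ n := by
    rw [Polynomial.aeval_eq_sum_range]
  constructor
  · rw [haev, map_sum]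
    refine Finset.sum_congr rfl fun n _ => ?_
    rw [map_smul, (hpow n).1, smul_smul, smul_pow, smul_mul_assoc, smul_smul]
    congr 1
    simp only [ha]
    ring
  · rw [haev, map_sum, Finset.mul_sum]
    refine Finset.sum_congr rfl fun n _ => ?_
    rw [map_smul, (hpow n).2, smul_smul, mul_smul_comm, smul_pow, mul_smul_comm,
      smul_smul]
    congr 1
    simp only [hb]
    ring
end

section
/- In SU_q(3), the elements z_i := u³_i satisfy the quantum 5-sphere relations: zᵢzⱼ = q zⱼzᵢ for i < j, zᵢ*zⱼ = q zⱼzᵢ* for i ≠ j, [z₁*, z₁] = 0, [z₂*, z₂] = (1−q²)z₁z₁*, [z₃*, z₃] = (1−q²)(z₁z₁* + z₂z₂*), and ∑ᵢ zᵢzᵢ* = 1. -/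
lemma Lsmall {A : Type*} [Ring A] [Algebra ℂ A] (q : ℂ) (a b a' b' c : A)
    (h1 : b * c = c * b) (h2 : a * c = q • (c * a))
    (h3 : b' * c = q • (c * b')) (h4 : a' * c = c * a') :
    (a * b - q • (a' * b')) * c = q • (c * (a * b - q • (a' * b'))) := by
  have e1 : a * b * c = q • (c * (a * b)) := by
    rw [mul_assoc, h1, ← mul_assoc, h2, smul_mul_assoc, mul_assoc]
  have e2 : a' * b' * c = q • (c * (a' * b')) := by
    rw [mul_assoc, h3, mul_smul_comm, ← mul_assoc, h4, mul_assoc]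
  rw [sub_mul, smul_mul_assoc, e1, e2]
  simp only [mul_sub, mul_smul_comm, smul_sub, smul_smul]

lemma Llarge {A : Type*} [Ring A] [Algebra ℂ A] (q κ : ℂ) (a b a' b' c e : A)
    (g1 : b * c = q • (c * b))
    (g2 : a * c = c * a + κ • (a' * e))
    (g3 : b' * c = c * b' + κ • (b * e))
    (g4 : a' * c = q • (c * a'))
    (g5 : e * b = b * e) :
    (a * b - q • (a' * b')) * c = q • (c * (a * b - q • (a' * b'))) := by
  have e1 : a * b * c = q • (c * (a * b)) + (q * κ) • (a' * (b * e)) := by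
    rw [mul_assoc, g1, mul_smul_comm, ← mul_assoc, g2, add_mul, smul_mul_assoc,
      mul_assoc a' e b, g5, smul_add, smul_smul, mul_assoc]
  have e2 : a' * b' * c = q • (c * (a' * b')) + κ • (a' * (b * e)) := by
    rw [mul_assoc, g3, mul_add, mul_smul_comm, ← mul_assoc, g4, smul_mul_assoc, mul_assoc]
  rw [sub_mul, smul_mul_assoc, e1, e2]
  simp only [mul_sub, mul_smul_comm, smul_sub, smul_add, smul_smul]
  module

lemma C0 {A : Type*} [Ring A] [Algebra ℂ A] (q : ℂ) (a b a' b' c : A)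
    (h1 : a * c = c * a) (h2 : b * c = c * b)
    (h3 : a' * c = c * a') (h4 : b' * c = c * b') :
    (a * b - q • (a' * b')) * c = c * (a * b - q • (a' * b')) := by
  have e1 : a * b * c = c * (a * b) := by
    rw [mul_assoc, h2, ← mul_assoc, h1, mul_assoc]
  have e2 : a' * b' * c = c * (a' * b') := by
    rw [mul_assoc, h4, ← mul_assoc, h3, mul_assoc]
  rw [sub_mul, smul_mul_assoc, e1, e2]
  simp only [mul_sub, mul_smul_comm]

lemma C1 {A : Type*} [Ring A] [Algebra ℂ A] (q κ : ℂ) (a b a' b' c x y' e : A)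
    (f1 : a * c = c * a + κ • (x * e))
    (f2 : b * c = c * b)
    (f3 : a' * c = c * a')
    (f4 : b' * c = c * b' + κ • (y' * e))
    (f5 : e * b = b * e) :
    (a * b - q • (a' * b')) * c - c * (a * b - q • (a' * b'))
      = κ • ((x * b - q • (a' * y')) * e) := by
  have e1 : a * b * c = c * (a * b) + κ • (x * b * e) := by
    rw [mul_assoc, f2, ← mul_assoc, f1, add_mul, smul_mul_assoc, mul_assoc x e b, f5,
      mul_assoc, ← mul_assoc x b e]
  have e2 : a' * b' * c = c * (a' * b') + κ • (a' * (y' * e)) := by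
    rw [mul_assoc, f4, mul_add, mul_smul_comm, ← mul_assoc, f3, mul_assoc]
  rw [sub_mul, smul_mul_assoc, e1, e2, sub_mul, smul_mul_assoc]
  simp only [mul_sub, mul_smul_comm, smul_sub, smul_add, smul_smul, mul_assoc]
  module

lemma C2 {A : Type*} [Ring A] [Algebra ℂ A] (q κ : ℂ) (a b a' b' c x y e1 e0 : A)
    (f1 : a * c = c * a + κ • (x * e0))
    (f2 : b * c = c * b + κ • (y * e1))
    (f3 : a' * c = c * a' + κ • (x * e1))
    (f4 : b' * c = c * b' + κ • (y * e0))
    (f5 : e0 * b = b * e0)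
    (f6 : e1 * b' = b' * e1 - κ • (b * e0))
    (hκ : 1 + q * κ = q ^ 2) :
    (a * b - q • (a' * b')) * c - c * (a * b - q • (a' * b'))
      = κ • ((a * y - q • (x * b')) * e1) - (q * κ) • ((a' * y - q • (x * b)) * e0) := by
  have g1 : a * b * c = c * (a * b) + κ • (x * b * e0) + κ • (a * (y * e1)) := by
    rw [mul_assoc, f2, mul_add, mul_smul_comm, ← mul_assoc, f1, add_mul, smul_mul_assoc,
      mul_assoc x e0 b, f5, mul_assoc, ← mul_assoc x b e0]
  have g2 : a' * b' * c = c * (a' * b') + κ • (x * (b' * e1)) - (κ * κ) • (x * (b * e0))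
      + κ • (a' * (y * e0)) := by
    rw [mul_assoc, f4, mul_add, mul_smul_comm, ← mul_assoc, f3, add_mul, smul_mul_assoc,
      mul_assoc x e1 b', f6, mul_sub, smul_sub, mul_assoc, mul_smul_comm κ x, smul_smul]
    abel
  rw [sub_mul, smul_mul_assoc, g1, g2]
  simp only [sub_mul, smul_mul_assoc, mul_sub, mul_smul_comm, smul_sub, smul_add, smul_smul,
    mul_assoc]
  match_scalars <;> first | ring1 | linear_combination κ * hκ


/-- number of inversions of a permutation of `Fin 3` -/
def inversions (π : Equiv.Perm (Fin 3)) : ℕ :=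
  (Finset.univ.filter (fun p : Fin 3 × Fin 3 => p.1 < p.2 ∧ π p.2 < π p.1)).card

/-- the two-element ordered complement of an index in `{0,1,2}` -/
def compl3 (i : Fin 3) : Fin 3 × Fin 3 :=
  if i = 0 then (1, 2) else if i = 1 then (0, 2) else (0, 1)

/-- In `SU_q(3)`, the elements `zᵢ := u³ᵢ` satisfy the quantum 5-sphere relations. -/
theorem stmt_15 {A : Type*} [Ring A] [Algebra ℂ A] [StarRing A]
    (q : ℝ) (hq0 : 0 < q) (hq1 : q < 1) (u : Fin 3 → Fin 3 → A)
    (hcol : ∀ i j k : Fin 3, i < j → u i k * u j k = (q : ℂ) • (u j k * u i k))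
    (hrow : ∀ i j k : Fin 3, i < j → u k i * u k j = (q : ℂ) • (u k j * u k i))
    (hcomm1 : ∀ i j k l : Fin 3, i < j → k < l → u i l * u j k = u j k * u i l)
    (hcomm2 : ∀ i j k l : Fin 3, i < j → k < l →
      u i k * u j l - u j l * u i k = ((q - q⁻¹ : ℝ) : ℂ) • (u i l * u j k))
    (hdet : ∑ π : Equiv.Perm (Fin 3),
      ((-(q : ℂ)) ^ inversions π) • (u 0 (π 0) * u 1 (π 1) * u 2 (π 2)) = 1)
    (hstar : ∀ i j : Fin 3, star (u i j) =
      ((-(q : ℂ)) ^ ((j : ℤ) - (i : ℤ))) •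
        (u (compl3 i).1 (compl3 j).1 * u (compl3 i).2 (compl3 j).2 -
          (q : ℂ) • (u (compl3 i).1 (compl3 j).2 * u (compl3 i).2 (compl3 j).1)))
    (z : Fin 3 → A) (hz : ∀ i, z i = u 2 i) :
    (∀ i j : Fin 3, i < j → z i * z j = (q : ℂ) • (z j * z i)) ∧
    (∀ i j : Fin 3, i ≠ j → star (z i) * z j = (q : ℂ) • (z j * star (z i))) ∧
    (star (z 0) * z 0 = z 0 * star (z 0)) ∧
    (star (z 1) * z 1 - z 1 * star (z 1) = ((1 - q ^ 2 : ℝ) : ℂ) • (z 0 * star (z 0))) ∧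
    (star (z 2) * z 2 - z 2 * star (z 2) =
      ((1 - q ^ 2 : ℝ) : ℂ) • (z 0 * star (z 0) + z 1 * star (z 1))) ∧
    (z 0 * star (z 0) + z 1 * star (z 1) + z 2 * star (z 2) = 1) := by

  -- basic scalar facts
  have hqC : (q:ℂ) ≠ 0 := by
    simp only [ne_eq, Complex.ofReal_eq_zero]; exact ne_of_gt hq0
  have hqR : q ≠ 0 := ne_of_gt hq0
  have hκ2 : 1 + (q:ℂ) * ((q - q⁻¹ : ℝ) : ℂ) = (q:ℂ)^2 := by
    push_cast; field_simp; ring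
  -- rearranged cross commutation relations (row i vs row 2)
  have hc2' : ∀ (i k l : Fin 3), i < 2 → k < l →
      u i k * u 2 l = u 2 l * u i k + ((q - q⁻¹ : ℝ) : ℂ) • (u i l * u 2 k) := by
    intro i k l hi hkl
    exact sub_eq_iff_eq_add'.mp (hcomm2 i 2 k l hi hkl)
  -- star formulas
  have hs0 : star (z 0) = ((q:ℂ)^2)⁻¹ • (u 0 1 * u 1 2 - (q:ℂ) • (u 0 2 * u 1 1)) := by
    rw [hz 0, hstar 2 0, show (compl3 2) = (0,1) from rfl, show (compl3 0) = (1,2) from rfl]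
    norm_num
  have hs1 : star (z 1) = (-(q:ℂ)⁻¹) • (u 0 0 * u 1 2 - (q:ℂ) • (u 0 2 * u 1 0)) := by
    rw [hz 1, hstar 2 1, show (compl3 2) = (0,1) from rfl, show (compl3 1) = (0,2) from rfl]
    norm_num
  have hs2 : star (z 2) = (u 0 0 * u 1 1 - (q:ℂ) • (u 0 1 * u 1 0)) := by
    rw [hz 2, hstar 2 2, show (compl3 2) = (0,1) from rfl]
    norm_num
  -- q-commutation of minors with row-2 entries
  have key01 : (u 0 1 * u 1 2 - (q:ℂ) • (u 0 2 * u 1 1)) * u 2 1 = (q:ℂ) • (u 2 1 * (u 0 1 * u 1 2 - (q:ℂ) • (u 0 2 * u 1 1))) :=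
    Lsmall (q:ℂ) _ _ _ _ _ (hcomm1 1 2 1 2 (by decide) (by decide))
      (hcol 0 2 1 (by decide)) (hcol 1 2 1 (by decide))
      (hcomm1 0 2 1 2 (by decide) (by decide))
  have key02 : (u 0 1 * u 1 2 - (q:ℂ) • (u 0 2 * u 1 1)) * u 2 2 = (q:ℂ) • (u 2 2 * (u 0 1 * u 1 2 - (q:ℂ) • (u 0 2 * u 1 1))) :=
    Llarge (q:ℂ) ((q - q⁻¹ : ℝ) : ℂ) _ _ _ _ _ _ (hcol 1 2 2 (by decide))
      (hc2' 0 1 2 (by decide) (by decide)) (hc2' 1 1 2 (by decide) (by decide))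
      (hcol 0 2 2 (by decide)) (hcomm1 1 2 1 2 (by decide) (by decide)).symm
  have key10 : (u 0 0 * u 1 2 - (q:ℂ) • (u 0 2 * u 1 0)) * u 2 0 = (q:ℂ) • (u 2 0 * (u 0 0 * u 1 2 - (q:ℂ) • (u 0 2 * u 1 0))) :=
    Lsmall (q:ℂ) _ _ _ _ _ (hcomm1 1 2 0 2 (by decide) (by decide))
      (hcol 0 2 0 (by decide)) (hcol 1 2 0 (by decide))
      (hcomm1 0 2 0 2 (by decide) (by decide))
  have key12 : (u 0 0 * u 1 2 - (q:ℂ) • (u 0 2 * u 1 0)) * u 2 2 = (q:ℂ) • (u 2 2 * (u 0 0 * u 1 2 - (q:ℂ) • (u 0 2 * u 1 0))) :=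
    Llarge (q:ℂ) ((q - q⁻¹ : ℝ) : ℂ) _ _ _ _ _ _ (hcol 1 2 2 (by decide))
      (hc2' 0 0 2 (by decide) (by decide)) (hc2' 1 0 2 (by decide) (by decide))
      (hcol 0 2 2 (by decide)) (hcomm1 1 2 0 2 (by decide) (by decide)).symm
  have key20 : (u 0 0 * u 1 1 - (q:ℂ) • (u 0 1 * u 1 0)) * u 2 0 = (q:ℂ) • (u 2 0 * (u 0 0 * u 1 1 - (q:ℂ) • (u 0 1 * u 1 0))) :=
    Lsmall (q:ℂ) _ _ _ _ _ (hcomm1 1 2 0 1 (by decide) (by decide))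
      (hcol 0 2 0 (by decide)) (hcol 1 2 0 (by decide))
      (hcomm1 0 2 0 1 (by decide) (by decide))
  have key21 : (u 0 0 * u 1 1 - (q:ℂ) • (u 0 1 * u 1 0)) * u 2 1 = (q:ℂ) • (u 2 1 * (u 0 0 * u 1 1 - (q:ℂ) • (u 0 1 * u 1 0))) :=
    Llarge (q:ℂ) ((q - q⁻¹ : ℝ) : ℂ) _ _ _ _ _ _ (hcol 1 2 1 (by decide))
      (hc2' 0 0 1 (by decide) (by decide)) (hc2' 1 0 1 (by decide) (by decide))
      (hcol 0 2 1 (by decide)) (hcomm1 1 2 0 1 (by decide) (by decide)).symm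
  -- commutator identities
  have keyC0 : (u 0 1 * u 1 2 - (q:ℂ) • (u 0 2 * u 1 1)) * u 2 0 = u 2 0 * (u 0 1 * u 1 2 - (q:ℂ) • (u 0 2 * u 1 1)) :=
    C0 (q:ℂ) _ _ _ _ _ (hcomm1 0 2 0 1 (by decide) (by decide))
      (hcomm1 1 2 0 2 (by decide) (by decide)) (hcomm1 0 2 0 2 (by decide) (by decide))
      (hcomm1 1 2 0 1 (by decide) (by decide))
  have keyC1 : (u 0 0 * u 1 2 - (q:ℂ) • (u 0 2 * u 1 0)) * u 2 1 - u 2 1 * (u 0 0 * u 1 2 - (q:ℂ) • (u 0 2 * u 1 0)) = ((q - q⁻¹ : ℝ) : ℂ) • ((u 0 1 * u 1 2 - (q:ℂ) • (u 0 2 * u 1 1)) * u 2 0) :=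
    C1 (q:ℂ) ((q - q⁻¹ : ℝ) : ℂ) _ _ _ _ _ _ _ _ (hc2' 0 0 1 (by decide) (by decide))
      (hcomm1 1 2 1 2 (by decide) (by decide)) (hcomm1 0 2 1 2 (by decide) (by decide))
      (hc2' 1 0 1 (by decide) (by decide)) (hcomm1 1 2 0 2 (by decide) (by decide)).symm
  have f6 : u 2 1 * u 1 0 = u 1 0 * u 2 1 - ((q - q⁻¹ : ℝ) : ℂ) • (u 1 1 * u 2 0) := by
    have h := hcomm2 1 2 0 1 (by decide) (by decide)
    rw [sub_eq_iff_eq_add] at h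
    rw [h]; abel
  have keyC2 : (u 0 0 * u 1 1 - (q:ℂ) • (u 0 1 * u 1 0)) * u 2 2 - u 2 2 * (u 0 0 * u 1 1 - (q:ℂ) • (u 0 1 * u 1 0))
      = ((q - q⁻¹ : ℝ) : ℂ) • ((u 0 0 * u 1 2 - (q:ℂ) • (u 0 2 * u 1 0)) * u 2 1) - ((q:ℂ) * ((q - q⁻¹ : ℝ) : ℂ)) • ((u 0 1 * u 1 2 - (q:ℂ) • (u 0 2 * u 1 1)) * u 2 0) :=
    C2 (q:ℂ) ((q - q⁻¹ : ℝ) : ℂ) _ _ _ _ _ _ _ _ _ (hc2' 0 0 2 (by decide) (by decide))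
      (hc2' 1 1 2 (by decide) (by decide)) (hc2' 0 1 2 (by decide) (by decide))
      (hc2' 1 0 2 (by decide) (by decide)) (hcomm1 1 2 0 1 (by decide) (by decide)).symm
      f6 hκ2
  have r0 : u 2 0 * (u 0 1 * u 1 2 - (q:ℂ) • (u 0 2 * u 1 1)) = (u 0 1 * u 1 2 - (q:ℂ) • (u 0 2 * u 1 1)) * u 2 0 := keyC0.symm
  have r1 : u 2 1 * (u 0 0 * u 1 2 - (q:ℂ) • (u 0 2 * u 1 0)) = (u 0 0 * u 1 2 - (q:ℂ) • (u 0 2 * u 1 0)) * u 2 1 - ((q - q⁻¹ : ℝ) : ℂ) • ((u 0 1 * u 1 2 - (q:ℂ) • (u 0 2 * u 1 1)) * u 2 0) := by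
    rw [← keyC1]; abel
  have r2 : u 2 2 * (u 0 0 * u 1 1 - (q:ℂ) • (u 0 1 * u 1 0)) = (u 0 0 * u 1 1 - (q:ℂ) • (u 0 1 * u 1 0)) * u 2 2
      - (((q - q⁻¹ : ℝ) : ℂ) • ((u 0 0 * u 1 2 - (q:ℂ) • (u 0 2 * u 1 0)) * u 2 1) - ((q:ℂ) * ((q - q⁻¹ : ℝ) : ℂ)) • ((u 0 1 * u 1 2 - (q:ℂ) • (u 0 2 * u 1 1)) * u 2 0)) := by
    rw [← keyC2]; abel
  refine ⟨?_, ?_, ?_, ?_, ?_, ?_⟩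
  · intro i j hij
    rw [hz, hz]
    exact hrow i j 2 hij
  · -- star q-commutation
    have B01 : star (z 0) * z 1 = (q:ℂ) • (z 1 * star (z 0)) := by
      rw [hs0, hz 1, smul_mul_assoc, key01, mul_smul_comm, smul_comm]
    have B02 : star (z 0) * z 2 = (q:ℂ) • (z 2 * star (z 0)) := by
      rw [hs0, hz 2, smul_mul_assoc, key02, mul_smul_comm, smul_comm]
    have B10 : star (z 1) * z 0 = (q:ℂ) • (z 0 * star (z 1)) := by
      rw [hs1, hz 0, smul_mul_assoc, key10, mul_smul_comm, smul_comm]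
    have B12 : star (z 1) * z 2 = (q:ℂ) • (z 2 * star (z 1)) := by
      rw [hs1, hz 2, smul_mul_assoc, key12, mul_smul_comm, smul_comm]
    have B20 : star (z 2) * z 0 = (q:ℂ) • (z 0 * star (z 2)) := by
      rw [hs2, hz 0, key20]
    have B21 : star (z 2) * z 1 = (q:ℂ) • (z 1 * star (z 2)) := by
      rw [hs2, hz 1, key21]
    intro i j hij
    fin_cases i <;> fin_cases j <;>
      first
      | exact absurd rfl hij
      | exact B01 | exact B02 | exact B10 | exact B12 | exact B20 | exact B21
  · rw [hs0, hz 0, smul_mul_assoc, keyC0, mul_smul_comm]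
  · rw [hs1, hs0, hz 1, hz 0, smul_mul_assoc, mul_smul_comm, mul_smul_comm, r1, r0]
    match_scalars <;> (push_cast; field_simp; try ring)
  · rw [hs2, hs1, hs0, hz 2, hz 1, hz 0, mul_smul_comm, mul_smul_comm, keyC2, r1, r0]
    match_scalars <;> (push_cast; field_simp; try ring)
  · -- the sphere relation
    have huniv : (Finset.univ : Finset (Equiv.Perm (Fin 3)))
        = {1, Equiv.swap 0 1, Equiv.swap 0 2, Equiv.swap 1 2,
           Equiv.swap 0 1 * Equiv.swap 1 2, Equiv.swap 1 2 * Equiv.swap 0 1} := by decide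
    have hD : ((u 0 0 * u 1 1 - (q:ℂ) • (u 0 1 * u 1 0)) * u 2 2) - (q:ℂ) • ((u 0 0 * u 1 2 - (q:ℂ) • (u 0 2 * u 1 0)) * u 2 1) + ((q:ℂ)^2) • ((u 0 1 * u 1 2 - (q:ℂ) • (u 0 2 * u 1 1)) * u 2 0) = 1 := by
      conv_rhs => rw [← hdet]
      rw [huniv]
      rw [Finset.sum_insert (by decide), Finset.sum_insert (by decide),
        Finset.sum_insert (by decide), Finset.sum_insert (by decide),
        Finset.sum_insert (by decide), Finset.sum_singleton]
      simp only [show inversions 1 = 0 from by decide,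
        show inversions (Equiv.swap 0 1) = 1 from by decide,
        show inversions (Equiv.swap 0 2) = 3 from by decide,
        show inversions (Equiv.swap 1 2) = 1 from by decide,
        show inversions (Equiv.swap 0 1 * Equiv.swap 1 2) = 2 from by decide,
        show inversions (Equiv.swap 1 2 * Equiv.swap 0 1) = 2 from by decide,
        show ((1 : Equiv.Perm (Fin 3)) 0) = 0 from by decide,
        show ((1 : Equiv.Perm (Fin 3)) 1) = 1 from by decide,
        show ((1 : Equiv.Perm (Fin 3)) 2) = 2 from by decide,
        show ((Equiv.swap 0 1 : Equiv.Perm (Fin 3)) 0) = 1 from by decide,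
        show ((Equiv.swap 0 1 : Equiv.Perm (Fin 3)) 1) = 0 from by decide,
        show ((Equiv.swap 0 1 : Equiv.Perm (Fin 3)) 2) = 2 from by decide,
        show ((Equiv.swap 0 2 : Equiv.Perm (Fin 3)) 0) = 2 from by decide,
        show ((Equiv.swap 0 2 : Equiv.Perm (Fin 3)) 1) = 1 from by decide,
        show ((Equiv.swap 0 2 : Equiv.Perm (Fin 3)) 2) = 0 from by decide,
        show ((Equiv.swap 1 2 : Equiv.Perm (Fin 3)) 0) = 0 from by decide,
        show ((Equiv.swap 1 2 : Equiv.Perm (Fin 3)) 1) = 2 from by decide,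
        show ((Equiv.swap 1 2 : Equiv.Perm (Fin 3)) 2) = 1 from by decide,
        show ((Equiv.swap 0 1 * Equiv.swap 1 2 : Equiv.Perm (Fin 3)) 0) = 1 from by decide,
        show ((Equiv.swap 0 1 * Equiv.swap 1 2 : Equiv.Perm (Fin 3)) 1) = 2 from by decide,
        show ((Equiv.swap 0 1 * Equiv.swap 1 2 : Equiv.Perm (Fin 3)) 2) = 0 from by decide,
        show ((Equiv.swap 1 2 * Equiv.swap 0 1 : Equiv.Perm (Fin 3)) 0) = 2 from by decide,
        show ((Equiv.swap 1 2 * Equiv.swap 0 1 : Equiv.Perm (Fin 3)) 1) = 0 from by decide,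
        show ((Equiv.swap 1 2 * Equiv.swap 0 1 : Equiv.Perm (Fin 3)) 2) = 1 from by decide]
      simp only [sub_mul, smul_mul_assoc, smul_sub, smul_smul]
      match_scalars <;> ring
    rw [hs0, hs1, hs2, hz 0, hz 1, hz 2, mul_smul_comm, mul_smul_comm, r0, r1, r2]
    conv_rhs => rw [← hD]
    match_scalars <;> (push_cast; field_simp; try ring)
end
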